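/- Let (Ω, F, ℙ) be a probability space, r > 0, P > 0, c ∈ ℝ, R ∈ [0,1), and let t < t₁ < t₂ < ⋯ be a strictly increasing sequence of times with T := t_m for some m ≥ 1. Let τ : Ω → (t, ∞] be a measurable random time such that almost surely τ ∈ {t₁, t₂, …} ∪ {∞}. Then P·e^{−r(T−t)}·ℙ(τ > T) + cP·𝔼[∫_t^T e^{−r(u−t)}·1_{{τ > u}} du] + R·P·𝔼[e^{−r(τ−t)}·1_{{τ ≤ T}}] = (1−R)·P·e^{−r(T−t)}·ℙ(τ > t_m) + Σ_{i=1}^{m−1} ((cP/r) − RP)·(e^{−r(t_i−t)} − e^{−r(t_{i+1}−t)})·ℙ(τ > t_i) + (cP/r)·(1 − e^{−r(t₁−t)}) + R·P·e^{−r(t₁−t)}. -/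

import Mathlib

open MeasureTheory Real Set

/-- Closed form for the discount-factor integral. -/
private lemma expInt (r t : ℝ) (hr : r ≠ 0) (a b : ℝ) :
    ∫ u in a..b, Real.exp (-r * (u - t)) =
      (Real.exp (-r * (a - t)) - Real.exp (-r * (b - t))) / r := by
  have h : ∀ u : ℝ, HasDerivAt (fun v => -Real.exp (-r * (v - t)) / r)
      (Real.exp (-r * (u - t))) u := by
    intro u
    have h1 : HasDerivAt (fun v : ℝ => -r * (v - t)) (-r) u := by
      simpa using ((hasDerivAt_id u).sub_const t).const_mul (-r)
    have h2 := (Real.hasDerivAt_exp (-r * (u - t))).comp u h1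
    have h3 := h2.neg.div_const r
    refine h3.congr_deriv ?_
    field_simp
  rw [intervalIntegral.integral_eq_sub_of_hasDerivAt (fun u _ => h u)
      ((Real.continuous_exp.comp (by continuity)).intervalIntegrable a b)]
  field_simp
  ring

/-- Telescoping sum. -/
private lemma div_le_div_of_nonneg_right' {a b r : ℝ} (hr : 0 < r) (hab : a ≤ b) :
    a / r ≤ b / r :=
  (div_le_div_iff_of_pos_right hr).mpr hab

private lemma tele (E : ℕ → ℝ) (n : ℕ) (hn : 1 ≤ n) :
    ∑ i ∈ Finset.Ico 1 n, (E i - E (i + 1)) = E 1 - E n := by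
  induction n with
  | zero => omega
  | succ k ih =>
    by_cases hk : 1 ≤ k
    · rw [Finset.sum_Ico_succ_top hk, ih hk]; ring
    · have hk0 : k = 0 := by omega
      subst hk0; simp

/-- If the cutoff is beyond the interval, the coupon integral is the full discount integral. -/
private lemma couponFull (r t a b : ℝ) (hab : a ≤ b) (x : EReal) (hx : (b : EReal) < x) :
    (∫ u in a..b, if (u : EReal) < x then Real.exp (-r * (u - t)) else 0) =
      ∫ u in a..b, Real.exp (-r * (u - t)) := by
  apply intervalIntegral.integral_congr
  intro u hu
  rw [Set.uIcc_of_le hab] at hu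
  have hub : (u : EReal) ≤ (b : EReal) := EReal.coe_le_coe_iff.mpr hu.2
  have : (u : EReal) < x := lt_of_le_of_lt hub hx
  simp [this]

/-- If the cutoff `s` lies inside the interval, the coupon integral truncates at `s`. -/
private lemma couponCut (r t a b s : ℝ) (ha : a ≤ s) (hb : s ≤ b) :
    (∫ u in a..b, if (u : EReal) < ((s : ℝ) : EReal) then Real.exp (-r * (u - t)) else 0) =
      ∫ u in a..s, Real.exp (-r * (u - t)) := by
  have hs : ∀ᵐ u : ℝ ∂MeasureTheory.volume, u ≠ s := by
    rw [MeasureTheory.ae_iff]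
    have : {u : ℝ | ¬u ≠ s} = {s} := by ext u; simp
    rw [this]
    exact measure_singleton s
  have h1 : (∫ u in a..b, if (u : EReal) < ((s : ℝ) : EReal) then Real.exp (-r * (u - t)) else 0)
      = ∫ u in a..b, Set.indicator {v : ℝ | v ≤ s} (fun u => Real.exp (-r * (u - t))) u := by
    apply intervalIntegral.integral_congr_ae
    filter_upwards [hs] with u hu _
    by_cases h : u < s
    · rw [if_pos (EReal.coe_lt_coe_iff.mpr h), Set.indicator_of_mem (by exact h.le)]
    · have hle : ¬u ≤ s := fun hle' => h (lt_of_le_of_ne hle' hu)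
      rw [if_neg (fun hc => h (EReal.coe_lt_coe_iff.mp hc)),
        Set.indicator_of_notMem (by exact hle)]
  rw [h1, intervalIntegral.integral_indicator ⟨ha, hb⟩]

/-- The pointwise identity underlying Theorem 3. -/
private lemma key_pointwise (r P c R t T : ℝ) (ts : ℕ → ℝ) (m : ℕ) (hm : 1 ≤ m)
    (hr : r ≠ 0) (hT : T = ts m)
    (hts : ∀ i j, 1 ≤ i → i < j → ts i < ts j)
    (x : EReal) (hx : (∃ k, 1 ≤ k ∧ x = ((ts k : ℝ) : EReal)) ∨ x = ⊤) :
    P * Real.exp (-r * (T - t)) * (if (T : EReal) < x then (1 : ℝ) else 0)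
      + c * P * (if x ≤ (T : EReal) then (1 - Real.exp (-r * (x.toReal - t))) / r
          else (1 - Real.exp (-r * (T - t))) / r)
      + R * P * (if x ≤ (T : EReal) then Real.exp (-r * (x.toReal - t)) else 0)
    = (1 - R) * P * Real.exp (-r * (T - t)) * (if ((ts m : ℝ) : EReal) < x then (1 : ℝ) else 0)
      + (∑ i ∈ Finset.Ico 1 m,
          ((c * P / r) - R * P) * (Real.exp (-r * (ts i - t)) - Real.exp (-r * (ts (i + 1) - t)))
            * (if ((ts i : ℝ) : EReal) < x then (1 : ℝ) else 0))
      + ((c * P / r) * (1 - Real.exp (-r * (ts 1 - t)))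
          + R * P * Real.exp (-r * (ts 1 - t))) := by
  have hAB : ((T : EReal) < x) ∨ (∃ k, 1 ≤ k ∧ k ≤ m ∧ x = ((ts k : ℝ) : EReal)) := by
    rcases hx with ⟨k, hk, hxk⟩ | hxt
    · by_cases hkm : k ≤ m
      · exact Or.inr ⟨k, hk, hkm, hxk⟩
      · refine Or.inl ?_
        rw [hxk, hT]
        exact EReal.coe_lt_coe_iff.mpr (hts m k hm (by omega))
    · exact Or.inl (hxt ▸ EReal.coe_lt_top T)
  rcases hAB with hA | ⟨k, hk1, hkm, hxk⟩
  · -- no conversion before maturity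
    have h1 : ¬x ≤ (T : EReal) := not_le.mpr hA
    have h2 : ∀ i, 1 ≤ i → i ≤ m → ((ts i : ℝ) : EReal) < x := by
      intro i hi him
      refine lt_of_le_of_lt ?_ hA
      rw [hT]
      rcases eq_or_lt_of_le him with h | h
      · rw [h]
      · exact EReal.coe_le_coe_iff.mpr (hts i m hi h).le
    rw [if_pos hA, if_neg h1, if_neg h1, if_pos (hT ▸ hA)]
    rw [Finset.sum_congr rfl (fun i hi => by
      rw [if_pos (h2 i (Finset.mem_Ico.mp hi).1 (Finset.mem_Ico.mp hi).2.le), mul_one])]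
    rw [← Finset.mul_sum, tele _ m hm, hT]
    field_simp
    ring
  · -- conversion at time ts k ≤ T
    have hkT : ts k ≤ T := by
      rw [hT]
      rcases eq_or_lt_of_le hkm with h | h
      · rw [h]
      · exact (hts k m hk1 h).le
    have h1 : x ≤ (T : EReal) := by rw [hxk]; exact EReal.coe_le_coe_iff.mpr hkT
    have h2 : ¬(T : EReal) < x := not_lt.mpr h1
    have h3 : ¬((ts m : ℝ) : EReal) < x := by rw [← hT]; exact h2
    have h4 : x.toReal = ts k := by rw [hxk]; exact EReal.toReal_coe _
    rw [if_neg h2, if_pos h1, if_pos h1, if_neg h3, h4]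
    -- evaluate the sum
    have hsum : (∑ i ∈ Finset.Ico 1 m,
        ((c * P / r) - R * P) * (Real.exp (-r * (ts i - t)) - Real.exp (-r * (ts (i + 1) - t)))
          * (if ((ts i : ℝ) : EReal) < x then (1 : ℝ) else 0))
        = ((c * P / r) - R * P)
            * (Real.exp (-r * (ts 1 - t)) - Real.exp (-r * (ts k - t))) := by
      rw [← Finset.sum_Ico_consecutive _ hk1 hkm]
      have hfirst : ∀ i ∈ Finset.Ico 1 k,
          ((c * P / r) - R * P) * (Real.exp (-r * (ts i - t)) - Real.exp (-r * (ts (i + 1) - t)))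
            * (if ((ts i : ℝ) : EReal) < x then (1 : ℝ) else 0)
          = ((c * P / r) - R * P)
              * (Real.exp (-r * (ts i - t)) - Real.exp (-r * (ts (i + 1) - t))) := by
        intro i hi
        rcases Finset.mem_Ico.mp hi with ⟨hi1, hik⟩
        rw [if_pos (by rw [hxk]; exact EReal.coe_lt_coe_iff.mpr (hts i k hi1 hik)), mul_one]
      have hsecond : ∀ i ∈ Finset.Ico k m,
          ((c * P / r) - R * P) * (Real.exp (-r * (ts i - t)) - Real.exp (-r * (ts (i + 1) - t)))
            * (if ((ts i : ℝ) : EReal) < x then (1 : ℝ) else 0) = 0 := by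
        intro i hi
        rcases Finset.mem_Ico.mp hi with ⟨hik, _⟩
        have : ¬((ts i : ℝ) : EReal) < x := by
          rw [hxk]
          refine not_lt.mpr (EReal.coe_le_coe_iff.mpr ?_)
          rcases eq_or_lt_of_le hik with h | h
          · rw [h]
          · exact (hts k i hk1 h).le
        rw [if_neg this, mul_zero]
      rw [Finset.sum_congr rfl hfirst, Finset.sum_congr rfl hsecond, Finset.sum_const_zero,
        add_zero, ← Finset.mul_sum, tele _ k hk1]
    rw [hsum]
    field_simp
    ring

theorem stmt_13 {Ω : Type*} [MeasurableSpace Ω] (ℙ : Measure Ω) [IsProbabilityMeasure ℙ]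
    (r P c R : ℝ) (hr : 0 < r) (hP : 0 < P) (hR0 : 0 ≤ R) (hR1 : R < 1)
    (t : ℝ) (ts : ℕ → ℝ) (ht1 : t < ts 1) (hmono : ∀ i, 1 ≤ i → ts i < ts (i + 1))
    (m : ℕ) (hm : 1 ≤ m) (T : ℝ) (hT : T = ts m)
    (τ : Ω → EReal) (hτ : Measurable τ)
    (hgrid : ∀ᵐ ω ∂ℙ, (∃ i, 1 ≤ i ∧ τ ω = ((ts i : ℝ) : EReal)) ∨ τ ω = ⊤) :
    P * Real.exp (-r * (T - t)) * (ℙ {ω | (T : EReal) < τ ω}).toReal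
        + c * P *
          (∫ ω, (∫ u in t..T, if (u : EReal) < τ ω then Real.exp (-r * (u - t)) else 0) ∂ℙ)
        + R * P *
          (∫ ω, (if τ ω ≤ (T : EReal) then Real.exp (-r * ((τ ω).toReal - t)) else 0) ∂ℙ)
      = (1 - R) * P * Real.exp (-r * (T - t)) * (ℙ {ω | ((ts m : ℝ) : EReal) < τ ω}).toReal
        + (∑ i ∈ Finset.Ico 1 m,
            ((c * P / r) - R * P) * (Real.exp (-r * (ts i - t)) - Real.exp (-r * (ts (i + 1) - t)))
              * (ℙ {ω | ((ts i : ℝ) : EReal) < τ ω}).toReal)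
        + (c * P / r) * (1 - Real.exp (-r * (ts 1 - t)))
        + R * P * Real.exp (-r * (ts 1 - t)) := by
  classical
  have hrne : r ≠ 0 := ne_of_gt hr
  -- strict monotonicity of the grid
  have hts : ∀ i j, 1 ≤ i → i < j → ts i < ts j := by
    intro i j hi hij
    induction j with
    | zero => omega
    | succ n ih =>
      rcases Nat.lt_succ_iff_lt_or_eq.mp hij with h | h
      · exact lt_trans (ih h) (hmono n (by omega))
      · rw [← h]; exact hmono i hi
  have htslt : ∀ i, 1 ≤ i → t < ts i := by
    intro i hi
    rcases eq_or_lt_of_le hi with h | h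
    · rw [← h]; exact ht1
    · exact lt_trans ht1 (hts 1 i le_rfl h)
  have htT : t < T := hT ▸ htslt m hm
  -- measurable sets
  have hSet : ∀ s : ℝ, MeasurableSet {ω | (s : EReal) < τ ω} :=
    fun s => measurableSet_lt measurable_const hτ
  have hSetLe : MeasurableSet {ω | τ ω ≤ (T : EReal)} := measurableSet_le hτ measurable_const
  -- survival indicator functions
  set f : ℝ → Ω → ℝ := fun s ω => if (s : EReal) < τ ω then 1 else 0 with hfdef
  have hfind : ∀ s : ℝ, f s = Set.indicator {ω | (s : EReal) < τ ω} fun _ => (1 : ℝ) := by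
    intro s; funext ω; simp [hfdef, Set.indicator_apply, Set.mem_setOf_eq]
  have hfint : ∀ s : ℝ, Integrable (f s) ℙ := by
    intro s; rw [hfind s]; exact (integrable_const (1 : ℝ)).indicator (hSet s)
  have hfval : ∀ s : ℝ, ∫ ω, f s ω ∂ℙ = (ℙ {ω | (s : EReal) < τ ω}).toReal := by
    intro s
    rw [hfind s, MeasureTheory.integral_indicator_const (1 : ℝ) (hSet s)]
    simp [Measure.real]
  -- closed forms of the coupon and recovery payoffs
  set g : Ω → ℝ := fun ω => if τ ω ≤ (T : EReal)
      then (1 - Real.exp (-r * ((τ ω).toReal - t))) / r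
      else (1 - Real.exp (-r * (T - t))) / r with hgdef
  set h : Ω → ℝ := fun ω =>
      if τ ω ≤ (T : EReal) then Real.exp (-r * ((τ ω).toReal - t)) else 0 with hhdef
  have hgm : Measurable g := by
    apply Measurable.ite hSetLe
    · apply Measurable.div_const
      apply Measurable.const_sub
      exact Real.measurable_exp.comp ((hτ.ereal_toReal.sub_const t).const_mul (-r))
    · exact measurable_const
  have hhm : Measurable h := by
    apply Measurable.ite hSetLe
    · exact Real.measurable_exp.comp ((hτ.ereal_toReal.sub_const t).const_mul (-r))
    · exact measurable_const
  -- a.e. bounds, hence integrability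
  have hgridR : ∀ᵐ ω ∂ℙ, (τ ω ≤ (T : EReal) → t < (τ ω).toReal) := by
    filter_upwards [hgrid] with ω hω hle
    rcases hω with ⟨k, hk, hxk⟩ | hxt
    · rw [hxk, EReal.toReal_coe]; exact htslt k hk
    · rw [hxt] at hle; exact absurd hle (by simp)
  have hgint : Integrable g ℙ := by
    apply Integrable.mono' (integrable_const (1 / r)) hgm.aestronglyMeasurable
    filter_upwards [hgridR] with ω hω
    simp only [hgdef]
    by_cases hle : τ ω ≤ (T : EReal)
    · rw [if_pos hle]
      have h1 : Real.exp (-r * ((τ ω).toReal - t)) ≤ 1 := by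
        apply Real.exp_le_one_iff.mpr
        nlinarith [hω hle]
      have h2 : 0 < Real.exp (-r * ((τ ω).toReal - t)) := Real.exp_pos _
      rw [Real.norm_eq_abs, abs_div, abs_of_pos hr]
      exact div_le_div_of_nonneg_right' hr (by rw [abs_of_nonneg (by linarith)]; linarith)
    · rw [if_neg hle]
      have h1 : Real.exp (-r * (T - t)) ≤ 1 := by
        apply Real.exp_le_one_iff.mpr
        nlinarith
      have h2 : 0 < Real.exp (-r * (T - t)) := Real.exp_pos _
      rw [Real.norm_eq_abs, abs_div, abs_of_pos hr]
      exact div_le_div_of_nonneg_right' hr (by rw [abs_of_nonneg (by linarith)]; linarith)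
  have hhint : Integrable h ℙ := by
    apply Integrable.mono' (integrable_const (1 : ℝ)) hhm.aestronglyMeasurable
    filter_upwards [hgridR] with ω hω
    simp only [hhdef]
    by_cases hle : τ ω ≤ (T : EReal)
    · rw [if_pos hle, Real.norm_eq_abs, abs_of_pos (Real.exp_pos _)]
      apply Real.exp_le_one_iff.mpr
      nlinarith [hω hle]
    · rw [if_neg hle]; simp
  -- the coupon integral equals its closed form a.e.
  have hcoupon : ∀ᵐ ω ∂ℙ,
      (∫ u in t..T, if (u : EReal) < τ ω then Real.exp (-r * (u - t)) else 0) = g ω := by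
    filter_upwards [hgrid] with ω hω
    simp only [hgdef]
    rcases hω with ⟨k, hk, hxk⟩ | hxt
    · by_cases hkm : k ≤ m
      · have hkT : ts k ≤ T := by
          rw [hT]
          rcases eq_or_lt_of_le hkm with hh | hh
          · rw [hh]
          · exact (hts k m hk hh).le
        have hle : τ ω ≤ (T : EReal) := by rw [hxk]; exact EReal.coe_le_coe_iff.mpr hkT
        rw [if_pos hle, hxk, couponCut r t t T (ts k) (htslt k hk).le hkT,
          expInt r t hrne, EReal.toReal_coe]
        simp
      · have hTx : (T : EReal) < τ ω := by
          rw [hxk, hT]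
          exact EReal.coe_lt_coe_iff.mpr (hts m k hm (by omega))
        have hle : ¬τ ω ≤ (T : EReal) := not_le.mpr hTx
        rw [if_neg hle, couponFull r t t T htT.le _ hTx, expInt r t hrne]
        simp
    · have hTx : (T : EReal) < τ ω := hxt ▸ EReal.coe_lt_top T
      have hle : ¬τ ω ≤ (T : EReal) := not_le.mpr hTx
      rw [if_neg hle, couponFull r t t T htT.le _ hTx, expInt r t hrne]
      simp
  -- the central integral identity
  have main : (∫ ω, (P * Real.exp (-r * (T - t)) * f T ω + c * P * g ω + R * P * h ω) ∂ℙ)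
      = ∫ ω, ((1 - R) * P * Real.exp (-r * (T - t)) * f (ts m) ω
          + (∑ i ∈ Finset.Ico 1 m,
              ((c * P / r) - R * P)
                * (Real.exp (-r * (ts i - t)) - Real.exp (-r * (ts (i + 1) - t)))
                * f (ts i) ω)
          + ((c * P / r) * (1 - Real.exp (-r * (ts 1 - t)))
              + R * P * Real.exp (-r * (ts 1 - t)))) ∂ℙ := by
    apply integral_congr_ae
    filter_upwards [hgrid] with ω hω
    exact key_pointwise r P c R t T ts m hm hrne hT hts (τ ω) hω
  -- expand the left-hand side of `main`
  have lhs_eq : (∫ ω, (P * Real.exp (-r * (T - t)) * f T ω + c * P * g ω + R * P * h ω) ∂ℙ)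
      = P * Real.exp (-r * (T - t)) * (ℙ {ω | (T : EReal) < τ ω}).toReal
        + c * P * (∫ ω, g ω ∂ℙ) + R * P * (∫ ω, h ω ∂ℙ) := by
    have hA1 : Integrable (fun ω => P * Real.exp (-r * (T - t)) * f T ω) ℙ :=
      (hfint T).const_mul _
    have hA2 : Integrable (fun ω => c * P * g ω) ℙ := hgint.const_mul _
    have hA3 : Integrable (fun ω => R * P * h ω) ℙ := hhint.const_mul _
    have hA12 : Integrable (fun ω => P * Real.exp (-r * (T - t)) * f T ω + c * P * g ω) ℙ :=
      hA1.add hA2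
    rw [integral_add hA12 hA3, integral_add hA1 hA2,
      integral_const_mul _, integral_const_mul _, integral_const_mul _, hfval T]
  -- expand the right-hand side of `main`
  have rhs_eq : (∫ ω, ((1 - R) * P * Real.exp (-r * (T - t)) * f (ts m) ω
          + (∑ i ∈ Finset.Ico 1 m,
              ((c * P / r) - R * P)
                * (Real.exp (-r * (ts i - t)) - Real.exp (-r * (ts (i + 1) - t)))
                * f (ts i) ω)
          + ((c * P / r) * (1 - Real.exp (-r * (ts 1 - t)))
              + R * P * Real.exp (-r * (ts 1 - t)))) ∂ℙ)
      = (1 - R) * P * Real.exp (-r * (T - t)) * (ℙ {ω | ((ts m : ℝ) : EReal) < τ ω}).toReal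
        + (∑ i ∈ Finset.Ico 1 m,
            ((c * P / r) - R * P)
              * (Real.exp (-r * (ts i - t)) - Real.exp (-r * (ts (i + 1) - t)))
              * (ℙ {ω | ((ts i : ℝ) : EReal) < τ ω}).toReal)
        + ((c * P / r) * (1 - Real.exp (-r * (ts 1 - t)))
            + R * P * Real.exp (-r * (ts 1 - t))) := by
    have hsint : Integrable (fun ω => ∑ i ∈ Finset.Ico 1 m,
        ((c * P / r) - R * P)
          * (Real.exp (-r * (ts i - t)) - Real.exp (-r * (ts (i + 1) - t)))
          * f (ts i) ω) ℙ :=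
      integrable_finset_sum _ (fun i _ => (hfint (ts i)).const_mul _)
    have hB1 : Integrable (fun ω => (1 - R) * P * Real.exp (-r * (T - t)) * f (ts m) ω) ℙ :=
      (hfint (ts m)).const_mul _
    have hB12 : Integrable (fun ω => (1 - R) * P * Real.exp (-r * (T - t)) * f (ts m) ω
        + ∑ i ∈ Finset.Ico 1 m,
            ((c * P / r) - R * P)
              * (Real.exp (-r * (ts i - t)) - Real.exp (-r * (ts (i + 1) - t)))
              * f (ts i) ω) ℙ := hB1.add hsint
    have hB3 : Integrable (fun _ : Ω => (c * P / r) * (1 - Real.exp (-r * (ts 1 - t)))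
        + R * P * Real.exp (-r * (ts 1 - t))) ℙ := integrable_const _
    rw [integral_add hB12 hB3, integral_add hB1 hsint,
      integral_const_mul _, hfval (ts m),
      integral_finset_sum _ (fun i _ => (hfint (ts i)).const_mul _), integral_const]
    simp only [probReal_univ, one_smul]
    congr 1
    congr 1
    apply Finset.sum_congr rfl
    intro i _
    rw [integral_const_mul _, hfval (ts i)]
  -- put everything together
  have hcg : (∫ ω, (∫ u in t..T, if (u : EReal) < τ ω then Real.exp (-r * (u - t)) else 0) ∂ℙ)
      = ∫ ω, g ω ∂ℙ := integral_congr_ae hcoupon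
  have hhg : (∫ ω, (if τ ω ≤ (T : EReal) then Real.exp (-r * ((τ ω).toReal - t)) else 0) ∂ℙ)
      = ∫ ω, h ω ∂ℙ := by rfl
  rw [hcg, hhg]
  have := main
  rw [lhs_eq, rhs_eq] at this
  linarith [this]
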